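/- Let G be an RDF graph over nodes V and labels Σ, let e be a property path, and let A = (Q, Σ±, q0, F, δ) be an NFA over the signed alphabet Σ± whose language L(A) equals L(e). Assume u is a term of G. Then for every node v, the pair (u,v) belongs to ⟦e⟧_G if and only if there exist an accepting state q_f ∈ F and a (possibly empty) directed path in the product graph G × A from the node (u, q0) to the node (v, q_f). -/

import Mathlib

/-- Letters of the signed alphabet `Σ± = Σ ∪ {a⁻ | a ∈ Σ}`. -/
inductive Signed (σ : Type*) where
  | pos (a : σ)
  | neg (a : σ)

/-- Flip the sign of a signed letter. -/
def Signed.flip {σ : Type*} : Signed σ → Signed σ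
  | .pos a => .neg a
  | .neg a => .pos a

/-- `inv w`: reverse the word and flip every letter. -/
def winv {σ : Type*} (w : List (Signed σ)) : List (Signed σ) :=
  (w.map Signed.flip).reverse

/-- `Step G ℓ x y` means `G ⊢ x →ℓ y`. An RDF graph is a finite set of triples. -/
def Step {V σ : Type*} (G : Finset (V × σ × V)) : Signed σ → V → V → Prop
  | .pos a, x, y => (x, a, y) ∈ G
  | .neg a, x, y => (y, a, x) ∈ G

/-- A `w`-labeled path from `x` to `y` in `G`. -/
inductive LabPath {V σ : Type*} (G : Finset (V × σ × V)) : V → List (Signed σ) → V → Prop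
  | nil (x : V) : LabPath G x [] x
  | cons {x y z : V} {ℓ : Signed σ} {w : List (Signed σ)} :
      Step G ℓ x y → LabPath G y w z → LabPath G x (ℓ :: w) z

/-- A term of `G`: a node occurring as subject or object of a triple of `G`. -/
def IsTerm {V σ : Type*} (G : Finset (V × σ × V)) (x : V) : Prop :=
  ∃ p y, (x, p, y) ∈ G ∨ (y, p, x) ∈ G

/-- Property paths `e ::= a | e⁻ | e₁·e₂ | e₁+e₂ | e* | e?`. -/
inductive PP (σ : Type*) where
  | base (a : σ)
  | inv (e : PP σ)
  | comp (e₁ e₂ : PP σ)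
  | alt (e₁ e₂ : PP σ)
  | star (e : PP σ)
  | opt (e : PP σ)

/-- `relPow r n` is the `(n+1)`-fold relational composition of `r`. -/
def relPow {V : Type*} (r : V → V → Prop) : ℕ → V → V → Prop
  | 0 => r
  | n + 1 => Relation.Comp r (relPow r n)

/-- The semantics `⟦e⟧_G` of a property path over an RDF graph. -/
def sem {V σ : Type*} (G : Finset (V × σ × V)) : PP σ → V → V → Prop
  | .base a => fun x y => (x, a, y) ∈ G
  | .inv e => fun x y => sem G e y x
  | .comp e₁ e₂ => Relation.Comp (sem G e₁) (sem G e₂)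
  | .alt e₁ e₂ => fun x y => sem G e₁ x y ∨ sem G e₂ x y
  | .star e => fun x y => (∃ n, relPow (sem G e) n x y) ∨ (x = y ∧ IsTerm G x)
  | .opt e => fun x y => sem G e x y ∨ (x = y ∧ IsTerm G x)

/-- The language `L(e) ⊆ (Σ±)*` of a property path. -/
def lang {σ : Type*} : PP σ → Language (Signed σ)
  | .base a => {[Signed.pos a]}
  | .inv e => winv '' lang e
  | .comp e₁ e₂ => lang e₁ * lang e₂
  | .alt e₁ e₂ => lang e₁ + lang e₂
  | .star e => KStar.kstar (lang e)
  | .opt e => lang e + 1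

/-- A run of an NFA with transition relation `δ` on a word. -/
inductive NFARun {σ Q : Type*} (δ : Q → Signed σ → Q → Prop) :
    Q → List (Signed σ) → Q → Prop
  | nil (q : Q) : NFARun δ q [] q
  | cons {q q' q'' : Q} {ℓ : Signed σ} {w : List (Signed σ)} :
      δ q ℓ q' → NFARun δ q' w q'' → NFARun δ q (ℓ :: w) q''

/-- The language `L(A)` of the NFA `(Q, Σ±, q0, F, δ)`. -/
def nfaLang {σ Q : Type*} (δ : Q → Signed σ → Q → Prop) (q0 : Q) (F : Set Q) :
    Language (Signed σ) :=
  {w | ∃ qf ∈ F, NFARun δ q0 w qf}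

/-- Edge relation of the product graph `G × A`. -/
def ProdEdge {V σ Q : Type*} (G : Finset (V × σ × V)) (δ : Q → Signed σ → Q → Prop) :
    V × Q → V × Q → Prop :=
  fun p p' => ∃ ℓ, Step G ℓ p.1 p'.1 ∧ δ p.2 ℓ p'.2

/-- Edge relation of the transition graph of the NFA. -/
def TransEdge {σ Q : Type*} (δ : Q → Signed σ → Q → Prop) : Q → Q → Prop :=
  fun q q' => ∃ ℓ, δ q ℓ q'

/-- `NSteps r n a b`: there is a directed path with exactly `n` edges from `a` to `b`. -/
def NSteps {α : Type*} (r : α → α → Prop) : ℕ → α → α → Prop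
  | 0 => fun a b => a = b
  | n + 1 => fun a c => ∃ b, r a b ∧ NSteps r n b c

/-- Distance (in `ℕ∞`) from a node to a set of nodes in a directed graph. -/
noncomputable def distToSet {α : Type*} (r : α → α → Prop) (S : Set α) (a : α) : ℕ∞ :=
  ⨅ (n : ℕ) (_ : ∃ b ∈ S, NSteps r n a b), (n : ℕ∞)

section Aux

variable {V σ Q : Type*}

lemma Signed.flip_flip (ℓ : Signed σ) : ℓ.flip.flip = ℓ := by cases ℓ <;> rfl

lemma winv_winv (w : List (Signed σ)) : winv (winv w) = w := by
  simp [winv, List.map_reverse, List.map_map, Function.comp_def, Signed.flip_flip]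

lemma step_flip {G : Finset (V × σ × V)} {ℓ : Signed σ} {x y : V}
    (h : Step G ℓ x y) : Step G ℓ.flip y x := by
  cases ℓ <;> exact h

lemma step_term {G : Finset (V × σ × V)} {ℓ : Signed σ} {x y : V}
    (h : Step G ℓ x y) : IsTerm G x ∧ IsTerm G y := by
  cases ℓ with
  | pos a => exact ⟨⟨a, y, Or.inl h⟩, ⟨a, x, Or.inr h⟩⟩
  | neg a => exact ⟨⟨a, y, Or.inr h⟩, ⟨a, x, Or.inl h⟩⟩

lemma labPath_term {G : Finset (V × σ × V)} {w : List (Signed σ)} {x y : V}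
    (h : LabPath G x w y) (hx : IsTerm G x) : IsTerm G y := by
  induction h with
  | nil => exact hx
  | cons hs _ ih => exact ih (step_term hs).2

lemma labPath_append {G : Finset (V × σ × V)} {w₁ w₂ : List (Signed σ)} {x z : V} :
    LabPath G x (w₁ ++ w₂) z ↔ ∃ y, LabPath G x w₁ y ∧ LabPath G y w₂ z := by
  induction w₁ generalizing x with
  | nil =>
    constructor
    · intro h; exact ⟨x, .nil x, h⟩
    · rintro ⟨y, hy, hz⟩; cases hy; exact hz
  | cons ℓ w₁ ih =>
    constructor
    · intro h
      cases h with
      | cons hs hp =>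
        obtain ⟨y, h1, h2⟩ := ih.mp hp
        exact ⟨y, .cons hs h1, h2⟩
    · rintro ⟨y, hy, hz⟩
      cases hy with
      | cons hs hp => exact .cons hs (ih.mpr ⟨y, hp, hz⟩)

lemma labPath_winv {G : Finset (V × σ × V)} {w : List (Signed σ)} {x y : V}
    (h : LabPath G x w y) : LabPath G y (winv w) x := by
  induction h with
  | nil x => exact .nil x
  | @cons x m z ℓ w hs _ ih =>
    have : winv (ℓ :: w) = winv w ++ [ℓ.flip] := by simp [winv]
    rw [this]
    exact labPath_append.mpr ⟨m, ih, .cons (step_flip hs) (.nil x)⟩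

lemma sem_to_word {G : Finset (V × σ × V)} {e : PP σ} {x y : V}
    (h : sem G e x y) : ∃ w ∈ lang e, LabPath G x w y := by
  induction e generalizing x y with
  | base a => exact ⟨[Signed.pos a], rfl, .cons h (.nil y)⟩
  | inv e ih =>
    obtain ⟨w, hw, hp⟩ := ih h
    exact ⟨winv w, ⟨w, hw, rfl⟩, labPath_winv hp⟩
  | comp e₁ e₂ ih₁ ih₂ =>
    obtain ⟨m, h1, h2⟩ := h
    obtain ⟨w₁, hw₁, hp₁⟩ := ih₁ h1
    obtain ⟨w₂, hw₂, hp₂⟩ := ih₂ h2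
    exact ⟨w₁ ++ w₂, Language.mem_mul.mpr ⟨w₁, hw₁, w₂, hw₂, rfl⟩,
      labPath_append.mpr ⟨m, hp₁, hp₂⟩⟩
  | alt e₁ e₂ ih₁ ih₂ =>
    rcases h with h | h
    · obtain ⟨w, hw, hp⟩ := ih₁ h; exact ⟨w, Or.inl hw, hp⟩
    · obtain ⟨w, hw, hp⟩ := ih₂ h; exact ⟨w, Or.inr hw, hp⟩
  | star e ih =>
    rcases h with ⟨n, hn⟩ | ⟨rfl, _⟩
    · induction n generalizing x with
      | zero =>
        obtain ⟨w, hw, hp⟩ := ih hn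
        exact ⟨w, Language.mem_kstar.mpr ⟨[w], by simp, by simpa using hw⟩, hp⟩
      | succ n ihn =>
        obtain ⟨m, h1, h2⟩ := hn
        obtain ⟨w₁, hw₁, hp₁⟩ := ih h1
        obtain ⟨w₂, hw₂, hp₂⟩ := ihn h2
        obtain ⟨S, rfl, hS⟩ := Language.mem_kstar.mp hw₂
        refine ⟨w₁ ++ S.flatten, Language.mem_kstar.mpr ⟨w₁ :: S, by simp, ?_⟩,
          labPath_append.mpr ⟨m, hp₁, hp₂⟩⟩
        intro m hm
        rcases List.mem_cons.mp hm with rfl | hm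
        · exact hw₁
        · exact hS m hm
    · exact ⟨[], Language.mem_kstar.mpr ⟨[], by simp, by simp⟩, .nil x⟩
  | opt e ih =>
    rcases h with h | ⟨rfl, _⟩
    · obtain ⟨w, hw, hp⟩ := ih h; exact ⟨w, Or.inl hw, hp⟩
    · exact ⟨[], Or.inr rfl, .nil x⟩

lemma word_to_sem {G : Finset (V × σ × V)} {e : PP σ} {w : List (Signed σ)} {x y : V}
    (hw : w ∈ lang e) (hp : LabPath G x w y) (hx : IsTerm G x) : sem G e x y := by
  induction e generalizing w x y with
  | base a =>
    simp only [lang, Set.mem_singleton_iff] at hw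
    subst hw
    cases hp with
    | cons hs hp' => cases hp'; exact hs
  | inv e ih =>
    obtain ⟨w', hw', rfl⟩ := hw
    have hy : IsTerm G y := labPath_term hp hx
    have : LabPath G y w' x := by
      have := labPath_winv hp
      rwa [winv_winv] at this
    exact ih hw' this hy
  | comp e₁ e₂ ih₁ ih₂ =>
    obtain ⟨w₁, hw₁, w₂, hw₂, rfl⟩ := Language.mem_mul.mp hw
    obtain ⟨m, hp₁, hp₂⟩ := labPath_append.mp hp
    exact ⟨m, ih₁ hw₁ hp₁ hx, ih₂ hw₂ hp₂ (labPath_term hp₁ hx)⟩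
  | alt e₁ e₂ ih₁ ih₂ =>
    rcases hw with hw | hw
    · exact Or.inl (ih₁ hw hp hx)
    · exact Or.inr (ih₂ hw hp hx)
  | star e ih =>
    obtain ⟨S, rfl, hS⟩ := Language.mem_kstar.mp hw
    induction S generalizing x with
    | nil =>
      cases hp
      exact Or.inr ⟨rfl, hx⟩
    | cons w₁ S ihS =>
      rw [List.flatten_cons] at hp
      obtain ⟨m, hp₁, hp₂⟩ := labPath_append.mp hp
      have h1 : sem G e x m := ih (hS w₁ (by simp)) hp₁ hx
      have hm : IsTerm G m := labPath_term hp₁ hx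
      have h2 := ihS hm (fun u hu => hS u (by simp [hu])) (Language.mem_kstar.mpr
        ⟨S, rfl, fun u hu => hS u (by simp [hu])⟩) hp₂
      rcases h2 with ⟨n, hn⟩ | ⟨rfl, _⟩
      · exact Or.inl ⟨n + 1, m, h1, hn⟩
      · exact Or.inl ⟨0, h1⟩
  | opt e ih =>
    rcases hw with hw | hw
    · exact Or.inl (ih hw hp hx)
    · replace hw : w = [] := (Language.mem_one _).mp hw
      subst hw
      cases hp
      exact Or.inr ⟨rfl, hx⟩

lemma prod_to_word {G : Finset (V × σ × V)} {δ : Q → Signed σ → Q → Prop}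
    {p p' : V × Q} (h : Relation.ReflTransGen (ProdEdge G δ) p p') :
    ∃ w, LabPath G p.1 w p'.1 ∧ NFARun δ p.2 w p'.2 := by
  induction h using Relation.ReflTransGen.head_induction_on with
  | refl => exact ⟨[], .nil _, .nil _⟩
  | head hedge _ ih =>
    obtain ⟨ℓ, hs, hd⟩ := hedge
    obtain ⟨w, hp, hr⟩ := ih
    exact ⟨ℓ :: w, .cons hs hp, .cons hd hr⟩

lemma word_to_prod {G : Finset (V × σ × V)} {δ : Q → Signed σ → Q → Prop}
    {w : List (Signed σ)} {x y : V} {q q' : Q}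
    (hp : LabPath G x w y) (hr : NFARun δ q w q') :
    Relation.ReflTransGen (ProdEdge G δ) (x, q) (y, q') := by
  induction hp generalizing q with
  | nil => cases hr; exact .refl
  | cons hs _ ih =>
    cases hr with
    | cons hd hr' =>
      exact Relation.ReflTransGen.head ⟨_, hs, hd⟩ (ih hr')

end Aux

/-- `(u,v) ∈ ⟦e⟧_G` iff some accepting state `q_f ∈ F` is reachable
at `(v,q_f)` from `(u,q0)` in the product graph `G × A`, provided `L(A) = L(e)`
and `u` is a term of `G`. -/
theorem stmt0 {V σ Q : Type*} [Fintype Q]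
    (G : Finset (V × σ × V)) (e : PP σ)
    (δ : Q → Signed σ → Q → Prop) (q0 : Q) (F : Set Q)
    (hL : nfaLang δ q0 F = lang e)
    (u : V) (hu : IsTerm G u) :
    ∀ v : V, sem G e u v ↔
      ∃ qf ∈ F, Relation.ReflTransGen (ProdEdge G δ) (u, q0) (v, qf) := by
  intro v
  constructor
  · intro h
    obtain ⟨w, hw, hp⟩ := sem_to_word h
    rw [← hL] at hw
    obtain ⟨qf, hqf, hr⟩ := hw
    exact ⟨qf, hqf, word_to_prod hp hr⟩
  · rintro ⟨qf, hqf, hpath⟩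
    obtain ⟨w, hp, hr⟩ := prod_to_word hpath
    have hw : w ∈ lang e := by rw [← hL]; exact ⟨qf, hqf, hr⟩
    exact word_to_sem hw hp hu
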